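/- arXiv:2106.12276 — 6 statements merged into one kernel-verified Lean document; each statement's English description precedes it below -/
import Mathlib

section
/- For all real k > 0, λ > 0 and x > 0, the function f_{k,λ} is differentiable at x and its derivative satisfies f'_{k,λ}(x) = (1/2) · f_{k,λ}(x) · [ −1 + (k−2)/(2x) + √(λ/x) · I'_{(k−2)/2}(√(λx)) / I_{(k−2)/2}(√(λx)) ], where I'_ν denotes the derivative of the function I_ν. -/
open Real

/-- Modified Bessel function of the first kind, defined by its power series. -/
noncomputable def besselI (ν : ℝ) (x : ℝ) : ℝ :=
  ∑' m : ℕ, (x / 2) ^ (2 * (m : ℝ) + ν) / ((Nat.factorial m : ℝ) * Real.Gamma ((m : ℝ) + ν + 1))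

/-- PDF of the non-central chi-squared distribution with `k` degrees of freedom
and non-centrality `lam`. -/
noncomputable def ncchi (k lam x : ℝ) : ℝ :=
  1 / 2 * Real.exp (-(x + lam) / 2) * (x / lam) ^ ((k - 2) / 4) *
    besselI ((k - 2) / 2) (Real.sqrt (lam * x))

/-- Coefficients of the Bessel series. -/
noncomputable def cB (ν : ℝ) (m : ℕ) : ℝ :=
  1 / ((Nat.factorial m : ℝ) * Real.Gamma ((m : ℝ) + ν + 1))

lemma cB_pos {ν : ℝ} (hν : -1 < ν) (m : ℕ) : 0 < cB ν m := by
  have h1 : 0 < (m : ℝ) + ν + 1 := by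
    have : (0:ℝ) ≤ m := Nat.cast_nonneg m
    linarith
  have := Real.Gamma_pos_of_pos h1
  have hf : (0:ℝ) < (Nat.factorial m : ℝ) := by positivity
  unfold cB; positivity

lemma cB_succ {ν : ℝ} (hν : -1 < ν) (m : ℕ) :
    cB ν (m + 1) = cB ν m / (((m : ℝ) + 1) * ((m : ℝ) + ν + 1)) := by
  have h1 : (0:ℝ) < (m : ℝ) + ν + 1 := by
    have : (0:ℝ) ≤ m := Nat.cast_nonneg m
    linarith
  have hG : Real.Gamma (((m:ℕ) + 1 : ℕ) + ν + 1) = ((m : ℝ) + ν + 1) * Real.Gamma ((m : ℝ) + ν + 1) := by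
    push_cast
    rw [show (m : ℝ) + 1 + ν + 1 = ((m : ℝ) + ν + 1) + 1 by ring]
    exact Real.Gamma_add_one h1.ne'
  have hGpos := Real.Gamma_pos_of_pos h1
  have hf : (0:ℝ) < (Nat.factorial m : ℝ) := by positivity
  unfold cB
  rw [hG, Nat.factorial_succ]
  push_cast
  field_simp

lemma summable_uB {ν : ℝ} (hν : -1 < ν) {R : ℝ} (hR : 0 ≤ R) :
    Summable (fun m : ℕ => ((m : ℝ) + 1) * R ^ m * cB ν m) := by
  apply summable_of_ratio_norm_eventually_le (r := 1/2) (by norm_num)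
  filter_upwards [Filter.eventually_ge_atTop (⌈4 * R⌉₊)] with m hm
  have hmR : 4 * R ≤ (m : ℝ) := le_trans (Nat.le_ceil _) (by exact_mod_cast hm)
  have hc := cB_pos hν m
  have hd : (0:ℝ) < ((m : ℝ) + 1) * ((m : ℝ) + ν + 1) := by
    have : (0:ℝ) ≤ m := Nat.cast_nonneg m
    have : (0:ℝ) < (m : ℝ) + ν + 1 := by linarith
    positivity
  have ht : (0:ℝ) ≤ R ^ m := by positivity
  have hnn1 : 0 ≤ ((m : ℝ) + 1) * R ^ m * cB ν m := by positivity
  have hnn2 : 0 ≤ (((m+1 : ℕ) : ℝ) + 1) * R ^ (m+1) * cB ν (m+1) := by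
    have := cB_pos hν (m+1); positivity
  rw [Real.norm_of_nonneg hnn2, Real.norm_of_nonneg hnn1]
  push_cast
  rw [cB_succ hν m, pow_succ]
  rw [mul_div_assoc' _ _ (((m : ℝ) + 1) * ((m : ℝ) + ν + 1)), div_le_iff₀ hd]
  have key : R * (R ^ m * cB ν m) ≤ (((m : ℝ) + ν + 1) / 4) * (R ^ m * cB ν m) := by
    apply mul_le_mul_of_nonneg_right _ (by positivity)
    have : (0:ℝ) ≤ m := Nat.cast_nonneg m
    linarith
  nlinarith [mul_le_mul_of_nonneg_left key (by positivity : (0:ℝ) ≤ (m:ℝ) + 1 + 1),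
    mul_nonneg ht hc.le, sq_nonneg ((m:ℝ)), mul_nonneg (mul_nonneg ht hc.le) (Nat.cast_nonneg m : (0:ℝ) ≤ m)]

lemma summable_gB {ν : ℝ} (hν : -1 < ν) (t : ℝ) :
    Summable (fun m : ℕ => t ^ m * cB ν m) := by
  apply Summable.of_norm_bounded (summable_uB hν (abs_nonneg t))
  intro m
  have hc := cB_pos hν m
  rw [norm_mul, norm_pow, Real.norm_of_nonneg hc.le]
  have : |t| ^ m * cB ν m ≤ ((m:ℝ) + 1) * |t| ^ m * cB ν m := by
    nlinarith [mul_nonneg (Nat.cast_nonneg m : (0:ℝ) ≤ m)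
      (mul_nonneg (pow_nonneg (abs_nonneg t) m) hc.le)]
  simpa [Real.norm_eq_abs] using this

/-- The entire part of the Bessel series. -/
noncomputable def gB (ν t : ℝ) : ℝ := ∑' m : ℕ, t ^ m * cB ν m

lemma gB_pos {ν : ℝ} (hν : -1 < ν) {t : ℝ} (ht : 0 ≤ t) : 0 < gB ν t := by
  refine Summable.tsum_pos (summable_gB hν t) (fun i => by have := cB_pos hν i; positivity) 0 ?_
  simpa using cB_pos hν 0

lemma gB_hasDerivAt {ν : ℝ} (hν : -1 < ν) (t : ℝ) :
    HasDerivAt (gB ν) (∑' m : ℕ, (m : ℝ) * t ^ (m - 1) * cB ν m) t := by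
  set R : ℝ := |t| + 1 with hRdef
  have hR0 : 0 ≤ R := by positivity
  have hR1 : 1 ≤ R := by rw [hRdef]; linarith [abs_nonneg t]
  have hu : Summable (fun m : ℕ => ((m : ℝ) + 1) * R ^ m * cB ν m) := summable_uB hν hR0
  have key : HasDerivAt (fun z : ℝ => ∑' m : ℕ, z ^ m * cB ν m)
      (∑' m : ℕ, (m : ℝ) * t ^ (m - 1) * cB ν m) t := by
    apply hasDerivAt_tsum_of_isPreconnected hu (Metric.isOpen_ball (x := (0:ℝ)) (ε := R))
      (convex_ball (0:ℝ) R).isPreconnected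
      (g := fun m y => y ^ m * cB ν m) (g' := fun m y => (m : ℝ) * y ^ (m - 1) * cB ν m)
      (fun n y _ => (hasDerivAt_pow n y).mul_const (cB ν n))
      ?_ (Metric.mem_ball_self (by linarith)) (summable_gB hν 0) ?_
    · intro n y hy
      have hyR : |y| < R := by simpa [Real.dist_eq] using hy
      have hc := cB_pos hν n
      have h1 : ‖(n : ℝ) * y ^ (n - 1) * cB ν n‖ = (n : ℝ) * |y| ^ (n - 1) * cB ν n := by
        rw [norm_mul, norm_mul, Real.norm_of_nonneg (Nat.cast_nonneg n : (0:ℝ) ≤ n),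
          Real.norm_of_nonneg hc.le, norm_pow, Real.norm_eq_abs]
      rw [h1]
      have h2 : |y| ^ (n - 1) ≤ R ^ (n - 1) :=
        pow_le_pow_left₀ (abs_nonneg y) hyR.le _
      have h3 : R ^ (n - 1) ≤ R ^ n := pow_le_pow_right₀ hR1 (Nat.sub_le n 1)
      have h4 : (n : ℝ) ≤ (n : ℝ) + 1 := by linarith
      calc (n : ℝ) * |y| ^ (n - 1) * cB ν n ≤ (n : ℝ) * R ^ n * cB ν n := by
            apply mul_le_mul_of_nonneg_right _ hc.le
            exact mul_le_mul_of_nonneg_left (h2.trans h3) (Nat.cast_nonneg n)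
        _ ≤ ((n : ℝ) + 1) * R ^ n * cB ν n := by
            apply mul_le_mul_of_nonneg_right _ hc.le
            exact mul_le_mul_of_nonneg_right h4 (by positivity)
    · have h5 : |t| < R := by rw [hRdef]; linarith
      simpa [Real.dist_eq] using h5
  exact key

lemma besselI_eq {ν : ℝ} (hν : -1 < ν) {y : ℝ} (hy : 0 < y) :
    besselI ν y = (y / 2) ^ ν * gB ν ((y / 2) ^ 2) := by
  have hy2 : 0 < y / 2 := by linarith
  unfold besselI gB
  rw [← tsum_mul_left]
  congr 1
  funext m
  have h1 : (y / 2) ^ (2 * (m : ℝ) + ν) = ((y / 2) ^ 2) ^ m * (y / 2) ^ ν := by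
    rw [Real.rpow_add hy2]
    congr 1
    rw [show (2 * (m : ℝ)) = ((2 * m : ℕ) : ℝ) by push_cast; ring, Real.rpow_natCast, pow_mul]
  rw [h1]
  unfold cB
  field_simp

lemma besselI_pos {ν : ℝ} (hν : -1 < ν) {y : ℝ} (hy : 0 < y) : 0 < besselI ν y := by
  rw [besselI_eq hν hy]
  have h1 : 0 < (y / 2) ^ ν := Real.rpow_pos_of_pos (by linarith) ν
  have h2 := gB_pos hν (t := (y / 2) ^ 2) (by positivity)
  positivity

lemma besselI_diffAt {ν : ℝ} (hν : -1 < ν) {y : ℝ} (hy : 0 < y) :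
    DifferentiableAt ℝ (besselI ν) y := by
  have h1 : DifferentiableAt ℝ (fun z : ℝ => (z / 2) ^ ν * gB ν ((z / 2) ^ 2)) y := by
    have hd1 : DifferentiableAt ℝ (fun z : ℝ => (z / 2) ^ ν) y := by
      apply DifferentiableAt.rpow_const (differentiableAt_id.div_const 2)
      left; positivity
    have hd2 : DifferentiableAt ℝ (fun z : ℝ => gB ν ((z / 2) ^ 2)) y := by
      exact ((gB_hasDerivAt hν ((y / 2) ^ 2)).differentiableAt).comp y
        (((differentiableAt_id : DifferentiableAt ℝ id y).div_const (2:ℝ)).pow 2)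
    exact hd1.mul hd2
  apply h1.congr_of_eventuallyEq
  filter_upwards [isOpen_Ioi.mem_nhds hy] with z hz
  exact besselI_eq hν hz

theorem stmt_0 (k lam x : ℝ) (hk : 0 < k) (hlam : 0 < lam) (hx : 0 < x) :
    DifferentiableAt ℝ (ncchi k lam) x ∧
    deriv (ncchi k lam) x =
      1 / 2 * ncchi k lam x *
        (-1 + (k - 2) / (2 * x) +
          Real.sqrt (lam / x) * deriv (besselI ((k - 2) / 2)) (Real.sqrt (lam * x)) /
            besselI ((k - 2) / 2) (Real.sqrt (lam * x))) := by
  set ν : ℝ := (k - 2) / 2 with hνdef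
  set p : ℝ := (k - 2) / 4 with hpdef
  set s : ℝ := Real.sqrt (lam * x) with hsdef
  have hν : -1 < ν := by rw [hνdef]; linarith
  have hlx : 0 < lam * x := mul_pos hlam hx
  have hs : 0 < s := Real.sqrt_pos.mpr hlx
  have hs2 : s ^ 2 = lam * x := Real.sq_sqrt hlx.le
  have hBpos : 0 < besselI ν s := besselI_pos hν hs
  have hBd : DifferentiableAt ℝ (besselI ν) s := besselI_diffAt hν hs
  -- derivative of the inner sqrt
  have hS : HasDerivAt (fun z : ℝ => Real.sqrt (lam * z)) (lam / (2 * s)) x := by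
    have h1 : HasDerivAt (fun z : ℝ => lam * z) lam x := by
      simpa using (hasDerivAt_id x).const_mul lam
    simpa [hsdef] using h1.sqrt hlx.ne'
  have hBc : HasDerivAt (fun z : ℝ => besselI ν (Real.sqrt (lam * z)))
      (deriv (besselI ν) s * (lam / (2 * s))) x := by
    exact (hBd.hasDerivAt.comp x hS)
  have hE : HasDerivAt (fun z : ℝ => Real.exp (-(z + lam) / 2))
      (Real.exp (-(x + lam) / 2) * (-1 / 2)) x := by
    have h1 : HasDerivAt (fun z : ℝ => -(z + lam) / 2) (-1 / 2) x := by
      simpa using (((hasDerivAt_id x).add_const lam).neg.div_const 2)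
    exact h1.exp
  have hP : HasDerivAt (fun z : ℝ => (z / lam) ^ p)
      ((1 / lam) * p * (x / lam) ^ (p - 1)) x := by
    have h1 : HasDerivAt (fun z : ℝ => z / lam) (1 / lam) x := by
      simpa using (hasDerivAt_id x).div_const lam
    have := h1.rpow_const (p := p) (Or.inl (by positivity))
    simpa using this
  have hF : HasDerivAt (ncchi k lam)
      (((1 / 2 * (Real.exp (-(x + lam) / 2) * (-1 / 2))) * (x / lam) ^ p +
          (1 / 2 * Real.exp (-(x + lam) / 2)) * ((1 / lam) * p * (x / lam) ^ (p - 1))) *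
            besselI ν s +
        (1 / 2 * Real.exp (-(x + lam) / 2) * (x / lam) ^ p) *
          (deriv (besselI ν) s * (lam / (2 * s)))) x := by
    exact ((hE.const_mul (1 / 2)).mul hP).mul hBc
  refine ⟨hF.differentiableAt, ?_⟩
  rw [hF.deriv]
  have hsl : Real.sqrt (lam / x) = s / x := by
    have h1 : lam / x = (lam * x) / x ^ 2 := by field_simp
    rw [h1, Real.sqrt_div hlx.le, Real.sqrt_sq hx.le, hsdef]
  have hP1 : (x / lam) ^ (p - 1) = (x / lam) ^ p / (x / lam) :=
    Real.rpow_sub_one (by positivity) p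
  simp only [ncchi, hsl, hP1, ← hνdef, ← hpdef, ← hsdef]
  set B' := deriv (besselI ν) s with hB'def
  set B := besselI ν s with hBdef
  set E := Real.exp (-(x + lam) / 2) with hEdef
  set P := (x / lam) ^ p with hPdef2
  field_simp
  linear_combination (-(2 * E * P * B')) * hs2
end

section
/- Let k > 0, λ > 0 and x > 0. If x is a critical point of f_{k,λ}, i.e. the derivative of f_{k,λ} at x is zero, then √(λx) · I'_{(k−2)/2}(√(λx)) = (x − (k−2)/2) · I_{(k−2)/2}(√(λx)), where I'_ν denotes the derivative of the function I_ν. -/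
open Real

open Filter FormalMultilinearSeries

noncomputable def bc (ν : ℝ) (m : ℕ) : ℝ :=
  1 / ((Nat.factorial m : ℝ) * Real.Gamma ((m : ℝ) + ν + 1))

lemma bc_pos (ν : ℝ) (hν : -1 < ν) (m : ℕ) : 0 < bc ν m := by
  have h1 : (0:ℝ) < (m:ℝ) + ν + 1 := by
    have := Nat.cast_nonneg (α := ℝ) m; linarith
  have := Real.Gamma_pos_of_pos h1
  have h2 : (0:ℝ) < (Nat.factorial m : ℝ) := by positivity
  unfold bc; positivity

lemma bc_radius (ν : ℝ) (hν : -1 < ν) : (ofScalars ℝ (bc ν)).radius = ⊤ := by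
  apply ofScalars_radius_eq_top_of_tendsto
  · exact Eventually.of_forall fun m => (bc_pos ν hν m).ne'
  · have key : ∀ m : ℕ, ‖bc ν (m+1)‖ / ‖bc ν m‖ = 1 / (((m:ℝ)+1) * ((m:ℝ) + ν + 1)) := by
      intro m
      have h1 : (0:ℝ) < (m:ℝ) + ν + 1 := by
        have := Nat.cast_nonneg (α := ℝ) m; linarith
      have hG : 0 < Real.Gamma ((m:ℝ) + ν + 1) := Real.Gamma_pos_of_pos h1
      have hf : (0:ℝ) < (Nat.factorial m : ℝ) := by positivity
      rw [Real.norm_of_nonneg (bc_pos ν hν (m+1)).le, Real.norm_of_nonneg (bc_pos ν hν m).le]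
      unfold bc
      have hGrec : Real.Gamma (((m:ℕ)+1 : ℕ) + ν + 1) = ((m:ℝ) + ν + 1) * Real.Gamma ((m:ℝ) + ν + 1) := by
        push_cast
        rw [show (m:ℝ) + 1 + ν + 1 = ((m:ℝ) + ν + 1) + 1 by ring,
          Real.Gamma_add_one h1.ne']
      rw [hGrec, Nat.factorial_succ]
      push_cast
      field_simp
    simp only [Nat.succ_eq_add_one, key]
    apply squeeze_zero
      (f := fun n : ℕ => 1 / (((n:ℝ)+1) * ((n:ℝ) + ν + 1)))
      (g := fun n : ℕ => (1/(ν+1)) * (1 / ((n:ℝ) + 1)))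
    · intro n
      have h2 : (0:ℝ) ≤ (n:ℝ) := Nat.cast_nonneg n
      have : (0:ℝ) < ((n:ℝ)+1) * ((n:ℝ)+ν+1) := by nlinarith
      exact div_nonneg one_pos.le this.le
    · intro n
      have h1 : (0:ℝ) < ν + 1 := by linarith
      have h2 : (0:ℝ) ≤ (n:ℝ) := Nat.cast_nonneg n
      have hA : (0:ℝ) < ((n:ℝ)+1) * (ν+1) := by nlinarith
      calc 1/(((n:ℝ)+1)*((n:ℝ)+ν+1)) ≤ 1/(((n:ℝ)+1)*(ν+1)) :=
            one_div_le_one_div_of_le hA (by nlinarith)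
        _ = (1/(ν+1)) * (1/((n:ℝ)+1)) := by field_simp
    · simpa using tendsto_one_div_add_atTop_nhds_zero_nat.const_mul (1/(ν+1))

lemma g_diff (ν : ℝ) (hν : -1 < ν) : Differentiable ℝ (ofScalarsSum (E := ℝ) (bc ν)) := by
  have hr : (0:ENNReal) < (ofScalars ℝ (bc ν)).radius := by
    rw [bc_radius ν hν]; exact ENNReal.zero_lt_top
  have h := ((ofScalars ℝ (bc ν)).hasFPowerSeriesOnBall hr).differentiableOn
  rw [bc_radius ν hν] at h
  rw [Metric.emetric_ball_top (0:ℝ)] at h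
  exact (differentiableOn_univ.mp h)

lemma besselI_eq_s1 (ν : ℝ) {x : ℝ} (hx : 0 < x) :
    besselI ν x = (x/2)^ν * ofScalarsSum (E := ℝ) (bc ν) ((x/2)^2) := by
  rw [ofScalars_sum_eq]
  unfold besselI bc
  rw [← tsum_mul_left]
  refine tsum_congr fun m => ?_
  have h2 : (0:ℝ) < x/2 := by linarith
  rw [Real.rpow_add h2, smul_eq_mul]
  rw [show (2 * (m:ℝ)) = ((2*m : ℕ) : ℝ) by push_cast; ring, Real.rpow_natCast, pow_mul]
  field_simp

theorem stmt_1 (k lam x : ℝ) (hk : 0 < k) (hlam : 0 < lam) (hx : 0 < x)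
    (hcrit : deriv (ncchi k lam) x = 0) :
    Real.sqrt (lam * x) * deriv (besselI ((k - 2) / 2)) (Real.sqrt (lam * x)) =
      (x - (k - 2) / 2) * besselI ((k - 2) / 2) (Real.sqrt (lam * x)) := by
  set ν : ℝ := (k - 2) / 2 with hνdef
  have hν : -1 < ν := by rw [hνdef]; linarith
  set s : ℝ := Real.sqrt (lam * x) with hsdef
  have hlx : 0 < lam * x := by positivity
  have hs : 0 < s := Real.sqrt_pos.mpr hlx
  have hs2 : s ^ 2 = lam * x := Real.sq_sqrt hlx.le
  -- besselI is differentiable at s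
  have hev : besselI ν =ᶠ[nhds s] fun y => (y/2)^ν * ofScalarsSum (E := ℝ) (bc ν) ((y/2)^2) :=
    Filter.eventually_of_mem (Ioi_mem_nhds hs) fun y hy => besselI_eq_s1 ν hy
  have hg : HasDerivAt (ofScalarsSum (E := ℝ) (bc ν))
      (deriv (ofScalarsSum (E := ℝ) (bc ν)) ((s/2)^2)) ((s/2)^2) :=
    ((g_diff ν hν) ((s/2)^2)).hasDerivAt
  have hinner : HasDerivAt (fun y : ℝ => (y/2)^2) (2 * (s/2) ^ 1 * (1/2)) s :=
    ((hasDerivAt_id s).div_const 2).pow 2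
  have hrpow : HasDerivAt (fun y : ℝ => (y/2)^ν) ((1/2) * ν * (s/2)^(ν-1)) s := by
    have h0 : s/2 ≠ 0 := by positivity
    simpa using ((hasDerivAt_id s).div_const 2).rpow_const (Or.inl h0)
  have hRHS : HasDerivAt (fun y : ℝ => (y/2)^ν * ofScalarsSum (E := ℝ) (bc ν) ((y/2)^2))
      ((1/2) * ν * (s/2)^(ν-1) * ofScalarsSum (E := ℝ) (bc ν) ((s/2)^2)
        + (s/2)^ν * (deriv (ofScalarsSum (E := ℝ) (bc ν)) ((s/2)^2) * (2 * (s/2) ^ 1 * (1/2)))) s :=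
    hrpow.mul (hg.comp s hinner)
  have hBdiff : DifferentiableAt ℝ (besselI ν) s :=
    ((hRHS.congr_of_eventuallyEq hev)).differentiableAt
  have hB : HasDerivAt (besselI ν) (deriv (besselI ν) s) s := hBdiff.hasDerivAt
  -- derivative of ncchi
  have hSder : HasDerivAt (fun y : ℝ => Real.sqrt (lam * y)) (1 / (2 * s) * lam) x := by
    have h1 : HasDerivAt (fun y : ℝ => lam * y) lam x := by
      simpa using (hasDerivAt_id x).const_mul lam
    exact (Real.hasDerivAt_sqrt hlx.ne').comp x h1
  have hBs : HasDerivAt (fun y : ℝ => besselI ν (Real.sqrt (lam * y)))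
      (deriv (besselI ν) s * (1 / (2 * s) * lam)) x := HasDerivAt.comp (h₂ := besselI ν) x hB hSder
  have hE : HasDerivAt (fun y : ℝ => Real.exp (-(y + lam) / 2))
      (Real.exp (-(x + lam) / 2) * (-1 / 2)) x := by
    have h1 : HasDerivAt (fun y : ℝ => -(y + lam) / 2) (-1 / 2) x := by
      simpa using (((hasDerivAt_id x).add_const lam).neg.div_const 2)
    simpa using h1.exp
  have hP : HasDerivAt (fun y : ℝ => (y / lam) ^ ((k - 2) / 4))
      ((1 / lam) * ((k - 2) / 4) * (x / lam) ^ ((k - 2) / 4 - 1)) x := by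
    have h0 : x / lam ≠ 0 := by positivity
    simpa using ((hasDerivAt_id x).div_const lam).rpow_const (Or.inl h0)
  have hD : HasDerivAt (ncchi k lam)
      (((1/2 * (Real.exp (-(x + lam) / 2) * (-1 / 2))) * (x / lam) ^ ((k - 2) / 4)
          + (1/2 * Real.exp (-(x + lam) / 2)) * ((1 / lam) * ((k - 2) / 4) * (x / lam) ^ ((k - 2) / 4 - 1)))
          * besselI ν s
        + ((1/2 * Real.exp (-(x + lam) / 2)) * (x / lam) ^ ((k - 2) / 4))
          * (deriv (besselI ν) s * (1 / (2 * s) * lam))) x :=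
    ((hE.const_mul (1/2)).mul hP).mul hBs
  rw [hD.deriv] at hcrit
  -- eliminate the rpow with exponent ((k-2)/4)
  have hxl : (0:ℝ) < x / lam := by positivity
  have hPQ : (x / lam) ^ ((k - 2) / 4) = (x / lam) ^ ((k - 2) / 4 - 1) * (x / lam) := by
    rw [← Real.rpow_add_one hxl.ne']; ring_nf
  rw [hPQ] at hcrit
  have hE0 : Real.exp (-(x + lam) / 2) ≠ 0 := (Real.exp_pos _).ne'
  have hQ0 : (x / lam) ^ ((k - 2) / 4 - 1) ≠ 0 := (Real.rpow_pos_of_pos hxl _).ne'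
  field_simp at hcrit
  rw [hνdef]
  have hA0 : (0:ℝ) < Real.exp ((-lam + -x) / 2) := Real.exp_pos _
  have hQ0' : (0:ℝ) < (x / lam) ^ ((k - 2 - 4) / 4) := Real.rpow_pos_of_pos hxl _
  have hc0 : (32 * lam ^ 3 * Real.exp ((-lam + -x) / 2) * (x / lam) ^ ((k - 2 - 4) / 4) * x) ≠ 0 := by
    positivity
  rw [show (-((x + lam) / 2)) = (-lam + -x) / 2 by ring] at hcrit
  apply mul_left_cancel₀ hc0
  linear_combination 8 * lam ^ 2 * s * hcrit +
    16 * lam ^ 2 * Real.exp ((-lam + -x) / 2) * (x / lam) ^ ((k - 2 - 4) / 4) *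
      besselI ((k - 2) / 2) s * (2 * x - k + 2) * hs2
end

section
/- Let k > 0 and let x : (0,∞) → (0,∞) be a differentiable function of λ such that for every λ > 0 the master equation √(λ·x(λ)) · I'_{(k−2)/2}(√(λ·x(λ))) = (x(λ) − (k−2)/2) · I_{(k−2)/2}(√(λ·x(λ))) holds, where I'_ν denotes the derivative of I_ν. Assume moreover that for every λ > 0 one has I_{(k−2)/2}(√(λ·x(λ))) ≠ 0 and x(λ) + λ·x'(λ) ≠ 0. Then x satisfies the ordinary differential equation λ·x'(λ)·(x(λ) − k − λ + 4) + x(λ)·(x(λ) − k − λ + 2) = 0 for every λ > 0. -/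
open Real

namespace BesselAux
open Filter

noncomputable def c (ν : ℝ) (m : ℕ) : ℝ :=
  1 / ((Nat.factorial m : ℝ) * Real.Gamma ((m : ℝ) + ν + 1))

lemma c_pos {ν : ℝ} (hν : -1 < ν) (m : ℕ) : 0 < c ν m := by
  have h1 : 0 < (m : ℝ) + ν + 1 := by
    have : (0:ℝ) ≤ m := Nat.cast_nonneg m
    linarith
  have := Real.Gamma_pos_of_pos h1
  have h2 : 0 < (Nat.factorial m : ℝ) := by positivity
  unfold c; positivity

lemma c_rec {ν : ℝ} (hν : -1 < ν) (m : ℕ) :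
    c ν m = ((m : ℝ) + 1) * ((m : ℝ) + ν + 1) * c ν (m + 1) := by
  have h1 : 0 < (m : ℝ) + ν + 1 := by
    have : (0:ℝ) ≤ m := Nat.cast_nonneg m
    linarith
  have hG : Real.Gamma (((m : ℝ) + 1) + ν + 1) = ((m : ℝ) + ν + 1) * Real.Gamma ((m : ℝ) + ν + 1) := by
    have : ((m : ℝ) + 1) + ν + 1 = ((m : ℝ) + ν + 1) + 1 := by ring
    rw [this, Real.Gamma_add_one (ne_of_gt h1)]
  have hGpos := Real.Gamma_pos_of_pos h1
  have hfac : (Nat.factorial (m+1) : ℝ) = ((m:ℝ)+1) * (Nat.factorial m : ℝ) := by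
    push_cast [Nat.factorial_succ]; ring
  unfold c
  rw [hfac]
  push_cast
  rw [hG]
  have hm1 : ((m:ℝ)+1) ≠ 0 := by positivity
  have hfne : (Nat.factorial m : ℝ) ≠ 0 := by positivity
  field_simp

/-- master summability lemma -/
lemma summable_weighted {ν : ℝ} (hν : -1 < ν) (w : ℕ → ℝ) (hw : ∀ m, 0 ≤ w m)
    (hgrow : ∀ m, w (m + 1) ≤ 8 * w m) (r : ℝ) (hr : 0 ≤ r) :
    Summable (fun m : ℕ => w m * c ν m * r ^ m) := by
  apply summable_of_ratio_norm_eventually_le (r := 1/2) (by norm_num)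
  obtain ⟨N, hN⟩ := exists_nat_ge (16 * r + |ν| + 1)
  filter_upwards [eventually_ge_atTop N] with m hm
  have hmN : (N : ℝ) ≤ m := by exact_mod_cast hm
  have hcp := c_pos hν m
  have hcp1 := c_pos hν (m+1)
  have hrec := c_rec hν m
  have hm0 : (0:ℝ) ≤ m := Nat.cast_nonneg m
  have h1 : 16 * r + |ν| + 1 ≤ (m:ℝ) := le_trans hN hmN
  have habs : -|ν| ≤ ν := neg_abs_le ν
  have key : 8 * r ≤ (1/2) * (((m:ℝ)+1) * ((m:ℝ)+ν+1)) := by nlinarith [abs_nonneg ν, hr]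
  have hP : 0 < ((m:ℝ)+1)*((m:ℝ)+ν+1) := by nlinarith [abs_nonneg ν]
  have hc1 : c ν m = c ν (m+1) * (((m:ℝ)+1)*((m:ℝ)+ν+1)) := by linear_combination hrec
  rw [Real.norm_of_nonneg (mul_nonneg (mul_nonneg (hw _) hcp1.le) (pow_nonneg hr _)),
      Real.norm_of_nonneg (mul_nonneg (mul_nonneg (hw _) hcp.le) (pow_nonneg hr _)), pow_succ, hc1]
  have h2 : w (m+1) * c ν (m+1) * (r^m * r) ≤ (8 * w m) * c ν (m+1) * (r^m * r) :=
    mul_le_mul_of_nonneg_right (mul_le_mul_of_nonneg_right (hgrow m) hcp1.le) (by positivity)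
  have h3 : (8*r) * (w m * c ν (m+1) * r^m) ≤ ((1/2) * (((m:ℝ)+1)*((m:ℝ)+ν+1))) * (w m * c ν (m+1) * r^m) :=
    mul_le_mul_of_nonneg_right key (mul_nonneg (mul_nonneg (hw m) hcp1.le) (pow_nonneg hr m))
  nlinarith [h2, h3]


lemma c_succ_le {ν : ℝ} (hν : -1 < ν) (m : ℕ) : (ν + 1) * c ν (m + 1) ≤ c ν m := by
  have hrec := c_rec hν m
  have hcp1 := c_pos hν (m + 1)
  have hm : (0:ℝ) ≤ m := Nat.cast_nonneg m
  nlinarith [mul_nonneg hm hcp1.le, mul_nonneg (mul_nonneg hm hm) hcp1.le]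

lemma S1 {ν : ℝ} (hν : -1 < ν) {r : ℝ} (hr : 0 ≤ r) :
    Summable (fun m : ℕ => ((m:ℝ) + 1) * c ν m * r ^ m) :=
  summable_weighted hν (fun m => (m:ℝ) + 1) (fun m => by positivity)
    (fun m => by push_cast; linarith [Nat.cast_nonneg (α := ℝ) m]) r hr

lemma S2 {ν : ℝ} (hν : -1 < ν) {r : ℝ} (hr : 0 ≤ r) :
    Summable (fun m : ℕ => ((m:ℝ) + 1) ^ 2 * c ν m * r ^ m) :=
  summable_weighted hν (fun m => ((m:ℝ) + 1) ^ 2) (fun m => by positivity)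
    (fun m => by push_cast; nlinarith [Nat.cast_nonneg (α := ℝ) m]) r hr

noncomputable def h (ν t : ℝ) : ℝ := ∑' m : ℕ, c ν m * t ^ m
noncomputable def h₁ (ν t : ℝ) : ℝ := ∑' m : ℕ, ((m:ℝ) + 1) * c ν (m + 1) * t ^ m
noncomputable def h₂ (ν t : ℝ) : ℝ :=
  ∑' m : ℕ, ((m:ℝ) + 1) * ((m:ℝ) + 2) * c ν (m + 2) * t ^ m

lemma SA {ν : ℝ} (hν : -1 < ν) (t : ℝ) : Summable (fun m : ℕ => c ν m * t ^ m) := by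
  apply Summable.of_norm
  apply Summable.of_nonneg_of_le (fun m => norm_nonneg _)
    (fun m => ?_) ((S1 hν (abs_nonneg t)))
  have hc := c_pos hν m
  rw [Real.norm_eq_abs, abs_mul, abs_pow, abs_of_nonneg hc.le]
  have hm : (0:ℝ) ≤ m := Nat.cast_nonneg m
  nlinarith [mul_nonneg (mul_nonneg hm hc.le) (pow_nonneg (abs_nonneg t) m)]

lemma SB {ν : ℝ} (hν : -1 < ν) (t : ℝ) :
    Summable (fun m : ℕ => ((m:ℝ) + 1) * c ν (m + 1) * t ^ m) := by
  apply Summable.of_norm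
  apply Summable.of_nonneg_of_le (fun m => norm_nonneg _)
    (fun m => ?_) (((S1 hν (abs_nonneg t))).mul_left (1 / (ν + 1)))
  have hc := c_pos hν m
  have hc1 := c_pos hν (m + 1)
  have hle := c_succ_le hν m
  have hm : (0:ℝ) ≤ m := Nat.cast_nonneg m
  have hb : (0:ℝ) < ν + 1 := by linarith
  have hP : (0:ℝ) ≤ |t| ^ m := pow_nonneg (abs_nonneg t) m
  have hm1 : (0:ℝ) ≤ (m:ℝ) + 1 := by linarith
  rw [Real.norm_eq_abs, abs_mul, abs_pow, abs_of_nonneg (by positivity : (0:ℝ) ≤ ((m:ℝ)+1) * c ν (m+1))]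
  rw [div_mul_eq_mul_div, le_div_iff₀ hb]
  nlinarith [mul_le_mul_of_nonneg_right hle (mul_nonneg hm1 hP)]

lemma SC {ν : ℝ} (hν : -1 < ν) (t : ℝ) :
    Summable (fun m : ℕ => ((m:ℝ) + 1) * ((m:ℝ) + 2) * c ν (m + 2) * t ^ m) := by
  apply Summable.of_norm
  apply Summable.of_nonneg_of_le (fun m => norm_nonneg _)
    (fun m => ?_) (((S2 hν (abs_nonneg t))).mul_left (2 / ((ν + 1) * (ν + 1))))
  have hc := c_pos hν m
  have hc1 := c_pos hν (m + 1)
  have hc2 := c_pos hν (m + 2)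
  have hle := c_succ_le hν m
  have hle1 := c_succ_le hν (m + 1)
  have hm : (0:ℝ) ≤ m := Nat.cast_nonneg m
  have hb : (0:ℝ) < ν + 1 := by linarith
  rw [Real.norm_eq_abs, abs_mul, abs_pow,
    abs_of_nonneg (by positivity : (0:ℝ) ≤ ((m:ℝ)+1) * ((m:ℝ)+2) * c ν (m+2))]
  push_cast at hle1
  have key : ((ν+1) * (ν+1)) * c ν (m + 2) ≤ c ν m := by nlinarith
  have hP : (0:ℝ) ≤ |t| ^ m := pow_nonneg (abs_nonneg t) m
  have hm1 : (0:ℝ) ≤ (m:ℝ) + 1 := by linarith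
  have hm2 : (0:ℝ) ≤ (m:ℝ) + 2 := by linarith
  rw [div_mul_eq_mul_div, le_div_iff₀ (by positivity)]
  nlinarith [mul_le_mul_of_nonneg_right key (mul_nonneg (mul_nonneg hm1 hm2) hP),
    mul_nonneg (mul_nonneg (mul_nonneg hm1 hm) hc.le) hP]


-- summable of shifted-derivative-style terms
lemma SD {ν : ℝ} (hν : -1 < ν) (t : ℝ) :
    Summable (fun m : ℕ => c ν m * ((m:ℕ) * t ^ (m - 1))) := by
  apply Summable.of_norm
  set R : ℝ := |t| + 1 with hR
  have hR1 : (1:ℝ) ≤ R := by rw [hR]; linarith [abs_nonneg t]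
  have hR0 : (0:ℝ) ≤ R := by linarith
  apply Summable.of_nonneg_of_le (fun m => norm_nonneg _) (fun m => ?_) (S1 hν hR0)
  have hc := c_pos hν m
  have hm : (0:ℝ) ≤ m := Nat.cast_nonneg m
  have h1 : |t| ^ (m - 1) ≤ R ^ (m - 1) := pow_le_pow_left₀ (abs_nonneg t) (by linarith) _
  have h2 : R ^ (m - 1) ≤ R ^ m := pow_le_pow_right₀ hR1 (Nat.sub_le m 1)
  simp only [Real.norm_eq_abs, abs_mul, abs_pow]
  rw [abs_of_nonneg hc.le, abs_of_nonneg hm]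
  nlinarith [mul_le_mul_of_nonneg_left (mul_le_mul_of_nonneg_left (h1.trans h2) hm) hc.le,
    mul_nonneg hc.le (pow_nonneg hR0 m)]

lemma SE {ν : ℝ} (hν : -1 < ν) (t : ℝ) :
    Summable (fun m : ℕ => ((m:ℝ) + 1) * c ν (m + 1) * ((m:ℕ) * t ^ (m - 1))) := by
  apply Summable.of_norm
  set R : ℝ := |t| + 1 with hR
  have hR1 : (1:ℝ) ≤ R := by rw [hR]; linarith [abs_nonneg t]
  have hR0 : (0:ℝ) ≤ R := by linarith
  apply Summable.of_nonneg_of_le (fun m => norm_nonneg _)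
    (fun m => ?_) ((S2 hν hR0).mul_left (1 / (ν + 1)))
  have hc := c_pos hν m
  have hc1 := c_pos hν (m + 1)
  have hle := c_succ_le hν m
  have hb : (0:ℝ) < ν + 1 := by linarith
  have hm : (0:ℝ) ≤ m := Nat.cast_nonneg m
  have hm1 : (0:ℝ) ≤ (m:ℝ) + 1 := by linarith
  have h1 : |t| ^ (m - 1) ≤ R ^ (m - 1) := pow_le_pow_left₀ (abs_nonneg t) (by linarith) _
  have h2 : R ^ (m - 1) ≤ R ^ m := pow_le_pow_right₀ hR1 (Nat.sub_le m 1)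
  have hPm : (0:ℝ) ≤ R ^ m := pow_nonneg hR0 m
  simp only [Real.norm_eq_abs, abs_mul, abs_pow]
  rw [abs_of_nonneg hm1, abs_of_nonneg hc1.le, abs_of_nonneg hm]
  rw [div_mul_eq_mul_div, le_div_iff₀ hb]
  have key2 : ((ν+1) * c ν (m+1)) * (((m:ℝ)+1) * ((m:ℝ) * |t| ^ (m-1))) ≤
      c ν m * (((m:ℝ)+1) * ((m:ℝ) * |t| ^ (m-1))) :=
    mul_le_mul_of_nonneg_right hle
      (mul_nonneg hm1 (mul_nonneg hm (pow_nonneg (abs_nonneg t) _)))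
  have t2 : c ν m * (((m:ℝ)+1) * ((m:ℝ) * |t| ^ (m-1))) ≤
      c ν m * (((m:ℝ)+1) * ((m:ℝ) * R ^ m)) := by
    apply mul_le_mul_of_nonneg_left _ hc.le
    apply mul_le_mul_of_nonneg_left _ hm1
    exact mul_le_mul_of_nonneg_left (h1.trans h2) hm
  nlinarith [key2, t2, mul_nonneg (mul_nonneg hm1 hc.le) hPm]

lemma hasDerivAt_h {ν : ℝ} (hν : -1 < ν) (t : ℝ) : HasDerivAt (h ν) (h₁ ν t) t := by
  set R : ℝ := |t| + 1 with hR
  have hR1 : (1:ℝ) ≤ R := by rw [hR]; linarith [abs_nonneg t]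
  have hR0 : (0:ℝ) ≤ R := by linarith
  have hmem : t ∈ Set.Ioo (-R) R := by
    constructor <;> cases abs_cases t <;> simp [hR] <;> linarith
  have main := hasDerivAt_tsum_of_isPreconnected
    (u := fun m : ℕ => ((m:ℝ) + 1) * c ν m * R ^ m)
    (g := fun (m : ℕ) (z : ℝ) => c ν m * z ^ m)
    (g' := fun (m : ℕ) (y : ℝ) => c ν m * ((m:ℕ) * y ^ (m - 1)))
    (S1 hν hR0) (isOpen_Ioo) (isPreconnected_Ioo)
    (fun m y _ => (hasDerivAt_pow m y).const_mul (c ν m))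
    (fun m y hy => ?_) hmem (SA hν t) hmem
  · have hval : ∑' m : ℕ, c ν m * ((m:ℕ) * t ^ (m - 1)) = h₁ ν t := by
      rw [Summable.tsum_eq_zero_add (SD hν t)]
      simp only [Nat.cast_zero, pow_zero, Nat.zero_sub, zero_mul, mul_zero, zero_add,
        Nat.cast_ofNat]
      unfold h₁
      apply tsum_congr
      intro m
      have : m + 1 - 1 = m := rfl
      rw [this]
      push_cast
      ring
    rw [← hval]
    exact main
  · -- bound on derivative
    have hc := c_pos hν m
    have hm : (0:ℝ) ≤ m := Nat.cast_nonneg m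
    have hyR : |y| ≤ R := by
      rw [Set.mem_Ioo] at hy
      rw [abs_le]; constructor <;> linarith [hy.1, hy.2]
    have h1 : |y| ^ (m - 1) ≤ R ^ (m - 1) := pow_le_pow_left₀ (abs_nonneg y) hyR _
    have h2 : R ^ (m - 1) ≤ R ^ m := pow_le_pow_right₀ hR1 (Nat.sub_le m 1)
    simp only [Real.norm_eq_abs, abs_mul, abs_pow]
    rw [abs_of_nonneg hc.le, abs_of_nonneg hm]
    nlinarith [mul_le_mul_of_nonneg_left (mul_le_mul_of_nonneg_left (h1.trans h2) hm) hc.le,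
      mul_nonneg hc.le (pow_nonneg hR0 m)]

lemma SF {ν : ℝ} (hν : -1 < ν) (t : ℝ) :
    Summable (fun m : ℕ => (m:ℝ) * ((m:ℝ) + 1) * c ν (m + 1) * t ^ m) := by
  apply Summable.of_norm
  apply Summable.of_nonneg_of_le (fun m => norm_nonneg _)
    (fun m => ?_) ((S2 hν (abs_nonneg t)).mul_left (1 / (ν + 1)))
  have hc := c_pos hν m
  have hc1 := c_pos hν (m + 1)
  have hle := c_succ_le hν m
  have hb : (0:ℝ) < ν + 1 := by linarith
  have hm : (0:ℝ) ≤ m := Nat.cast_nonneg m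
  have hm1 : (0:ℝ) ≤ (m:ℝ) + 1 := by linarith
  have hP : (0:ℝ) ≤ |t| ^ m := pow_nonneg (abs_nonneg t) m
  simp only [Real.norm_eq_abs, abs_mul, abs_pow]
  rw [abs_of_nonneg hm, abs_of_nonneg hm1, abs_of_nonneg hc1.le]
  rw [div_mul_eq_mul_div, le_div_iff₀ hb]
  have key2 : ((ν+1) * c ν (m+1)) * (((m:ℝ)+1) * ((m:ℝ) * |t| ^ m)) ≤
      c ν m * (((m:ℝ)+1) * ((m:ℝ) * |t| ^ m)) :=
    mul_le_mul_of_nonneg_right hle (mul_nonneg hm1 (mul_nonneg hm hP))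
  nlinarith [key2, mul_nonneg (mul_nonneg hm1 hc.le) hP]

lemma hasDerivAt_h₁ {ν : ℝ} (hν : -1 < ν) (t : ℝ) : HasDerivAt (h₁ ν) (h₂ ν t) t := by
  set R : ℝ := |t| + 1 with hR
  have hR1 : (1:ℝ) ≤ R := by rw [hR]; linarith [abs_nonneg t]
  have hR0 : (0:ℝ) ≤ R := by linarith
  have hmem : t ∈ Set.Ioo (-R) R := by
    constructor <;> cases abs_cases t <;> simp [hR] <;> linarith
  have main := hasDerivAt_tsum_of_isPreconnected
    (u := fun m : ℕ => 1 / (ν + 1) * (((m:ℝ) + 1) ^ 2 * c ν m * R ^ m))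
    (g := fun (m : ℕ) (z : ℝ) => ((m:ℝ) + 1) * c ν (m + 1) * z ^ m)
    (g' := fun (m : ℕ) (y : ℝ) => ((m:ℝ) + 1) * c ν (m + 1) * ((m:ℕ) * y ^ (m - 1)))
    ((S2 hν hR0).mul_left (1 / (ν + 1))) (isOpen_Ioo) (isPreconnected_Ioo)
    (fun m y _ => (hasDerivAt_pow m y).const_mul (((m:ℝ) + 1) * c ν (m + 1)))
    (fun m y hy => ?_) hmem (SB hν t) hmem
  · have hval : ∑' m : ℕ, ((m:ℝ) + 1) * c ν (m + 1) * ((m:ℕ) * t ^ (m - 1)) = h₂ ν t := by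
      rw [Summable.tsum_eq_zero_add (SE hν t)]
      simp only [Nat.cast_zero, zero_mul, mul_zero, zero_add]
      unfold h₂
      apply tsum_congr
      intro m
      have hmm : m + 1 - 1 = m := rfl
      rw [hmm]
      push_cast
      ring
    rw [← hval]
    exact main
  · have hc := c_pos hν m
    have hc1 := c_pos hν (m + 1)
    have hle := c_succ_le hν m
    have hb : (0:ℝ) < ν + 1 := by linarith
    have hm : (0:ℝ) ≤ m := Nat.cast_nonneg m
    have hm1 : (0:ℝ) ≤ (m:ℝ) + 1 := by linarith
    have hyR : |y| ≤ R := by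
      rw [Set.mem_Ioo] at hy
      rw [abs_le]; constructor <;> linarith [hy.1, hy.2]
    have h1 : |y| ^ (m - 1) ≤ R ^ (m - 1) := pow_le_pow_left₀ (abs_nonneg y) hyR _
    have h2 : R ^ (m - 1) ≤ R ^ m := pow_le_pow_right₀ hR1 (Nat.sub_le m 1)
    have hPm : (0:ℝ) ≤ R ^ m := pow_nonneg hR0 m
    simp only [Real.norm_eq_abs, abs_mul, abs_pow]
    rw [abs_of_nonneg hm1, abs_of_nonneg hc1.le, abs_of_nonneg hm]
    rw [div_mul_eq_mul_div, le_div_iff₀ hb]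
    have key2 : ((ν+1) * c ν (m+1)) * (((m:ℝ)+1) * ((m:ℝ) * |y| ^ (m-1))) ≤
        c ν m * (((m:ℝ)+1) * ((m:ℝ) * |y| ^ (m-1))) :=
      mul_le_mul_of_nonneg_right hle
        (mul_nonneg hm1 (mul_nonneg hm (pow_nonneg (abs_nonneg y) _)))
    have t2 : c ν m * (((m:ℝ)+1) * ((m:ℝ) * |y| ^ (m-1))) ≤
        c ν m * (((m:ℝ)+1) * ((m:ℝ) * R ^ m)) := by
      apply mul_le_mul_of_nonneg_left _ hc.le
      apply mul_le_mul_of_nonneg_left _ hm1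
      exact mul_le_mul_of_nonneg_left (h1.trans h2) hm
    nlinarith [key2, t2, mul_nonneg (mul_nonneg hm1 hc.le) hPm]

lemma h_ode {ν : ℝ} (hν : -1 < ν) (t : ℝ) :
    t * h₂ ν t + (ν + 1) * h₁ ν t = h ν t := by
  have hg := SF hν t
  have e1 : t * h₂ ν t = ∑' m : ℕ, (m:ℝ) * ((m:ℝ) + 1) * c ν (m + 1) * t ^ m := by
    unfold h₂
    rw [← tsum_mul_left, Summable.tsum_eq_zero_add hg]
    simp only [Nat.cast_zero, zero_mul, zero_add]
    apply tsum_congr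
    intro m
    push_cast
    ring
  have e2 : (ν + 1) * h₁ ν t = ∑' m : ℕ, (ν + 1) * (((m:ℝ) + 1) * c ν (m + 1) * t ^ m) := by
    unfold h₁; rw [← tsum_mul_left]
  rw [e1, e2, ← Summable.tsum_add hg ((SB hν t).mul_left (ν + 1))]
  unfold h
  apply tsum_congr
  intro m
  linear_combination (-(t ^ m)) * c_rec hν m


noncomputable def P (ν x : ℝ) : ℝ := (x/2) ^ ν * h ν (x^2/4)

noncomputable def D (ν x : ℝ) : ℝ :=
  ν * (x/2) ^ (ν-1) * (1/2) * h ν (x^2/4) + (x/2) ^ ν * (h₁ ν (x^2/4) * (x/2))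

noncomputable def E (ν x : ℝ) : ℝ :=
  (ν * ((ν-1) * (x/2) ^ (ν-2) * (1/2)) * (1/2) * h ν (x^2/4)
    + ν * (x/2) ^ (ν-1) * (1/2) * (h₁ ν (x^2/4) * (x/2)))
  + (ν * (x/2) ^ (ν-1) * (1/2) * (h₁ ν (x^2/4) * (x/2))
    + (x/2) ^ ν * (h₂ ν (x^2/4) * (x/2) * (x/2) + h₁ ν (x^2/4) * (1/2)))

lemma besselI_eq {ν : ℝ} {x : ℝ} (hx : 0 < x) : besselI ν x = P ν x := by
  have hhalf : (0:ℝ) < x/2 := by linarith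
  unfold besselI P h
  rw [← tsum_mul_left]
  apply tsum_congr
  intro m
  have e : (x/2 : ℝ) ^ (2*(m:ℝ)+ν) = ((x/2)^2) ^ m * (x/2) ^ ν := by
    rw [Real.rpow_add hhalf]
    congr 1
    rw [show (2*(m:ℝ)) = ((2*m : ℕ) : ℝ) by push_cast; ring, Real.rpow_natCast, pow_mul]
  rw [e, show ((x/2:ℝ))^2 = x^2/4 by ring]
  unfold c
  ring

lemma hasDerivAt_P {ν : ℝ} (hν : -1 < ν) {x : ℝ} (hx : 0 < x) :
    HasDerivAt (P ν) (D ν x) x := by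
  have hx2 : x/2 ≠ 0 := by positivity
  have hhalf : HasDerivAt (fun y : ℝ => y/2) (1/2) x := by
    simpa using (hasDerivAt_id x).div_const 2
  have ht : HasDerivAt (fun y : ℝ => y^2/4) (x/2) x := by
    have := (hasDerivAt_pow 2 x).div_const 4
    exact this.congr_deriv (by push_cast; ring)
  have hr : HasDerivAt (fun y : ℝ => (y/2) ^ ν) (ν * (x/2) ^ (ν-1) * (1/2)) x := by
    exact (Real.hasDerivAt_rpow_const (x := x/2) (p := ν) (Or.inl hx2)).comp x hhalf
  have hh : HasDerivAt (fun y : ℝ => h ν (y^2/4)) (h₁ ν (x^2/4) * (x/2)) x :=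
    ((hasDerivAt_h hν (x^2/4)).comp x ht :)
  exact hr.mul hh

lemma hasDerivAt_D {ν : ℝ} (hν : -1 < ν) {x : ℝ} (hx : 0 < x) :
    HasDerivAt (D ν) (E ν x) x := by
  have hx2 : x/2 ≠ 0 := by positivity
  have hhalf : HasDerivAt (fun y : ℝ => y/2) (1/2) x := by
    simpa using (hasDerivAt_id x).div_const 2
  have ht : HasDerivAt (fun y : ℝ => y^2/4) (x/2) x := by
    have := (hasDerivAt_pow 2 x).div_const 4
    exact this.congr_deriv (by push_cast; ring)
  have hr : HasDerivAt (fun y : ℝ => (y/2) ^ ν) (ν * (x/2) ^ (ν-1) * (1/2)) x := by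
    exact (Real.hasDerivAt_rpow_const (x := x/2) (p := ν) (Or.inl hx2)).comp x hhalf
  have hr1 : HasDerivAt (fun y : ℝ => (y/2) ^ (ν-1)) ((ν-1) * (x/2) ^ (ν-2) * (1/2)) x := by
    have := (Real.hasDerivAt_rpow_const (x := x/2) (p := ν-1) (Or.inl hx2)).comp x hhalf
    rw [show ν - 1 - 1 = ν - 2 by ring] at this
    exact this
  have hh : HasDerivAt (fun y : ℝ => h ν (y^2/4)) (h₁ ν (x^2/4) * (x/2)) x :=
    ((hasDerivAt_h hν (x^2/4)).comp x ht :)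
  have hh1 : HasDerivAt (fun y : ℝ => h₁ ν (y^2/4)) (h₂ ν (x^2/4) * (x/2)) x :=
    ((hasDerivAt_h₁ hν (x^2/4)).comp x ht :)
  have main := (((hr1.const_mul ν).mul_const (1/2)).mul hh).add (hr.mul (hh1.mul hhalf))
  unfold D E
  convert main using 1 <;> rfl

lemma hasDerivAt_besselI {ν : ℝ} (hν : -1 < ν) {x : ℝ} (hx : 0 < x) :
    HasDerivAt (besselI ν) (D ν x) x := by
  apply (hasDerivAt_P hν hx).congr_of_eventuallyEq
  filter_upwards [Ioi_mem_nhds hx] with y hy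
  exact besselI_eq hy

lemma deriv_besselI_eq {ν : ℝ} (hν : -1 < ν) {x : ℝ} (hx : 0 < x) :
    deriv (besselI ν) x = D ν x := (hasDerivAt_besselI hν hx).deriv

lemma hasDerivAt_deriv_besselI {ν : ℝ} (hν : -1 < ν) {x : ℝ} (hx : 0 < x) :
    HasDerivAt (deriv (besselI ν)) (E ν x) x := by
  apply (hasDerivAt_D hν hx).congr_of_eventuallyEq
  filter_upwards [Ioi_mem_nhds hx] with y hy
  exact deriv_besselI_eq hν hy

lemma bessel_ode {ν : ℝ} (hν : -1 < ν) {x : ℝ} (hx : 0 < x) :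
    x^2 * E ν x + x * D ν x = (x^2 + ν^2) * besselI ν x := by
  rw [besselI_eq hx]
  have hx2 : (0:ℝ) < x/2 := by linarith
  have hode := h_ode hν (x^2/4)
  unfold P D E
  have e1 : (x/2:ℝ) ^ ν = (x/2) ^ (ν-1) * (x/2) := by
    conv_lhs => rw [show ν = (ν-1) + 1 by ring]
    rw [Real.rpow_add hx2, Real.rpow_one]
  have e2 : (x/2:ℝ) ^ (ν-1) = (x/2) ^ (ν-2) * (x/2) := by
    conv_lhs => rw [show ν - 1 = (ν-2) + 1 by ring]
    rw [Real.rpow_add hx2, Real.rpow_one]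
  rw [e1, e2]
  linear_combination (x^2 * ((x/2) ^ (ν-2) * (x/2) * (x/2))) * hode


end BesselAux

open BesselAux

theorem stmt_3 (k : ℝ) (hk : 0 < k) (x : ℝ → ℝ)
    (hxpos : ∀ lam : ℝ, 0 < lam → 0 < x lam)
    (hxdiff : ∀ lam : ℝ, 0 < lam → DifferentiableAt ℝ x lam)
    (hmaster : ∀ lam : ℝ, 0 < lam →
      Real.sqrt (lam * x lam) * deriv (besselI ((k - 2) / 2)) (Real.sqrt (lam * x lam)) =
        (x lam - (k - 2) / 2) * besselI ((k - 2) / 2) (Real.sqrt (lam * x lam)))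
    (hIne : ∀ lam : ℝ, 0 < lam → besselI ((k - 2) / 2) (Real.sqrt (lam * x lam)) ≠ 0)
    (hne : ∀ lam : ℝ, 0 < lam → x lam + lam * deriv x lam ≠ 0) :
    ∀ lam : ℝ, 0 < lam →
      lam * deriv x lam * (x lam - k - lam + 4) + x lam * (x lam - k - lam + 2) = 0 := by
  intro lam hlam
  set ν : ℝ := (k - 2) / 2 with hνdef
  have hν : -1 < ν := by rw [hνdef]; linarith
  have hx0 : 0 < x lam := hxpos lam hlam
  have hu : 0 < lam * x lam := mul_pos hlam hx0
  set s : ℝ := Real.sqrt (lam * x lam) with hsdef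
  have hs : 0 < s := Real.sqrt_pos.mpr hu
  have hs2 : s ^ 2 = lam * x lam := Real.sq_sqrt hu.le
  set x' : ℝ := deriv x lam with hx'def
  have hxd : HasDerivAt x x' lam := (hxdiff lam hlam).hasDerivAt
  have hU : HasDerivAt (fun l => l * x l) (x lam + lam * x') lam := by
    have := (hasDerivAt_id lam).mul hxd
    exact this.congr_deriv (by simp)
  have hS : HasDerivAt (fun l => Real.sqrt (l * x l))
      (1 / (2 * s) * (x lam + lam * x')) lam :=
    (Real.hasDerivAt_sqrt hu.ne').comp lam hU
  set sd : ℝ := 1 / (2 * s) * (x lam + lam * x') with hsddef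
  have hL : HasDerivAt (fun l => Real.sqrt (l * x l) * deriv (besselI ν) (Real.sqrt (l * x l)))
      (sd * deriv (besselI ν) s + s * (E ν s * sd)) lam :=
    hS.mul ((hasDerivAt_deriv_besselI hν hs).comp lam hS :)
  have hR : HasDerivAt (fun l => (x l - ν) * besselI ν (Real.sqrt (l * x l)))
      (x' * besselI ν s + (x lam - ν) * (D ν s * sd)) lam :=
    (hxd.sub_const ν).mul ((hasDerivAt_besselI hν hs).comp lam hS :)
  have hev : (fun l => (x l - ν) * besselI ν (Real.sqrt (l * x l))) =ᶠ[nhds lam]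
      (fun l => Real.sqrt (l * x l) * deriv (besselI ν) (Real.sqrt (l * x l))) := by
    filter_upwards [Ioi_mem_nhds hlam] with y hy
    exact (hmaster y hy).symm
  have heq : sd * deriv (besselI ν) s + s * (E ν s * sd) =
      x' * besselI ν s + (x lam - ν) * (D ν s * sd) :=
    (hL.congr_of_eventuallyEq hev).unique hR
  rw [deriv_besselI_eq hν hs] at heq
  have e1 : s * D ν s = (x lam - ν) * besselI ν s := by
    have := hmaster lam hlam
    rw [deriv_besselI_eq hν hs] at this
    exact this
  have e2 := bessel_ode hν hs
  have hIv := hIne lam hlam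
  have heq2 : (x lam + lam * x') * (D ν s + s * E ν s) =
      2 * s * x' * besselI ν s + (x lam - ν) * D ν s * (x lam + lam * x') := by
    rw [hsddef] at heq
    field_simp at heq
    linear_combination heq
  have key : (x lam + lam * x') * ((lam * x lam + ν ^ 2) * besselI ν s) =
      (2 * (lam * x lam) * x' + (x lam - ν) ^ 2 * (x lam + lam * x')) * besselI ν s := by
    linear_combination s * heq2 - (x lam + lam * x') * e2 -
      (x lam + lam * x') * besselI ν s * hs2 + 2 * x' * besselI ν s * hs2 +
      (x lam - ν) * (x lam + lam * x') * e1
  have keyA : (x lam + lam * x') * (lam * x lam + ν ^ 2) =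
      2 * (lam * x lam) * x' + (x lam - ν) ^ 2 * (x lam + lam * x') := by
    have h' : ((x lam + lam * x') * (lam * x lam + ν ^ 2)) * besselI ν s =
        (2 * (lam * x lam) * x' + (x lam - ν) ^ 2 * (x lam + lam * x')) * besselI ν s := by
      linear_combination key
    exact mul_right_cancel₀ hIv h'
  apply mul_left_cancel₀ hx0.ne'
  rw [mul_zero]
  rw [hνdef] at keyA
  linear_combination -keyA
end

section
/- Let k > 0 and let x : (0,∞) → ℝ be a differentiable function satisfying λ·x'(λ)·(x(λ) − k − λ + 4) + x(λ)·(x(λ) − k − λ + 2) = 0 for all λ > 0. Define y : (0,∞) → ℝ by y(t) = t · x(k/t) (i.e. the substitution t = k/λ, y = t·x). Then y is differentiable and satisfies −(y'(t)·t − y(t))·(y(t) − k·t − k + 4t) + y(t)·(y(t) − k·t − k + 2t) = 0 for all t > 0. -/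
theorem stmt_4 (k : ℝ) (hk : 0 < k) (x : ℝ → ℝ)
    (hxdiff : ∀ lam : ℝ, 0 < lam → DifferentiableAt ℝ x lam)
    (hode : ∀ lam : ℝ, 0 < lam →
      lam * deriv x lam * (x lam - k - lam + 4) + x lam * (x lam - k - lam + 2) = 0) :
    ∀ t : ℝ, 0 < t →
      DifferentiableAt ℝ (fun t : ℝ => t * x (k / t)) t ∧
      -(deriv (fun t : ℝ => t * x (k / t)) t * t - t * x (k / t)) *
          (t * x (k / t) - k * t - k + 4 * t) +
        t * x (k / t) * (t * x (k / t) - k * t - k + 2 * t) = 0 := by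
  intro t ht
  have hlam : 0 < k / t := div_pos hk ht
  have hx := (hxdiff _ hlam).hasDerivAt
  have hinv : HasDerivAt (fun s : ℝ => k / s) (k * (-(t ^ 2)⁻¹)) t := by
    simpa [div_eq_mul_inv] using (hasDerivAt_inv ht.ne').const_mul k
  have hcomp : HasDerivAt (fun s : ℝ => x (k / s))
      (deriv x (k / t) * (k * (-(t ^ 2)⁻¹))) t := hx.comp t hinv
  have hy : HasDerivAt (fun s : ℝ => s * x (k / s))
      (1 * x (k / t) + t * (deriv x (k / t) * (k * (-(t ^ 2)⁻¹)))) t :=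
    (hasDerivAt_id t).mul hcomp
  refine ⟨hy.differentiableAt, ?_⟩
  rw [hy.deriv]
  have hode' := hode (k / t) hlam
  field_simp at hode' ⊢
  nlinarith [hode', sq_nonneg t]
end

section
/- For k = 2 and any λ > 0, the derivative of the density satisfies lim_{x→0⁺} f'_{2,λ}(x) = (1/4)·exp(−λ/2)·(λ/2 − 1). In particular, the limiting derivative at the origin is positive if and only if λ > 2. -/
open Real FormalMultilinearSeries

noncomputable def gser : ℕ → ℝ := fun m => (((m.factorial : ℝ)) ^ 2)⁻¹

noncomputable def gfun : ℝ → ℝ := ofScalarsSum gser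

lemma gser_radius : (ofScalars ℝ gser).radius = ⊤ := by
  apply ofScalars_radius_eq_top_of_tendsto
  · filter_upwards with n
    have := Nat.factorial_pos n
    simp [gser]
    positivity
  · have h : ∀ n : ℕ, ‖gser n.succ‖ / ‖gser n‖ = (1 / ((n : ℝ) + 1)) ^ 2 := by
      intro n
      have h0 : ((n.factorial : ℝ)) ≠ 0 := Nat.cast_ne_zero.2 (Nat.factorial_ne_zero n)
      have h1 : ((n : ℝ) + 1) ≠ 0 := by positivity
      simp only [gser, Nat.factorial_succ, norm_inv, norm_pow, Real.norm_eq_abs]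
      push_cast
      rw [abs_of_nonneg (by positivity), abs_of_nonneg (by positivity)]
      field_simp
    rw [show (0:ℝ) = 0 ^ 2 by norm_num]
    exact Filter.Tendsto.congr (fun n => (h n).symm)
      (tendsto_one_div_add_atTop_nhds_zero_nat.pow 2)

lemma gfun_hasFPB : HasFPowerSeriesOnBall gfun (ofScalars ℝ gser) 0 ⊤ := by
  have := FormalMultilinearSeries.hasFPowerSeriesOnBall (p := ofScalars ℝ gser)
    (by rw [gser_radius]; exact ENNReal.zero_lt_top)
  rwa [gser_radius] at this

lemma gfun_analyticAt (t : ℝ) : AnalyticAt ℝ gfun t :=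
  gfun_hasFPB.analyticAt_of_mem (by simp [EMetric.mem_ball, edist_lt_top])

lemma gfun_deriv_analyticAt (t : ℝ) : AnalyticAt ℝ (deriv gfun) t := by
  have h : AnalyticOnNhd ℝ gfun Set.univ := fun x _ => gfun_analyticAt x
  exact h.deriv t (Set.mem_univ t)

lemma gfun_zero : gfun 0 = 1 := by
  simp [gfun, gser]

lemma gfun_deriv_zero : deriv gfun 0 = 1 := by
  rw [gfun_hasFPB.hasFPowerSeriesAt.deriv]
  simp [FormalMultilinearSeries.coeff, ofScalars, gser]

lemma besselI_zero (y : ℝ) : besselI 0 y = gfun (y ^ 2 / 4) := by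
  rw [besselI, gfun, ofScalarsSum_eq_tsum]
  apply tsum_congr
  intro m
  have h1 : (2 * (m : ℝ) + 0) = ((2 * m : ℕ) : ℝ) := by push_cast; ring
  have h2 : (y / 2) ^ ((2 * m : ℕ) : ℝ) = (y ^ 2 / 4) ^ m := by
    rw [Real.rpow_natCast, pow_mul]
    congr 1
    ring
  have h3 : Real.Gamma ((m : ℝ) + 0 + 1) = (m.factorial : ℝ) := by
    rw [add_zero]
    exact_mod_cast Real.Gamma_nat_eq_factorial m
  rw [h1, h2, h3, gser, smul_eq_mul, ← sq, div_eq_mul_inv, mul_comm]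

lemma ncchi_two (lam x : ℝ) (hlam : 0 < lam) (hx : 0 < x) :
    ncchi 2 lam x = 1 / 2 * Real.exp (-(x + lam) / 2) * gfun (lam * x / 4) := by
  rw [ncchi]
  norm_num
  rw [besselI_zero, Real.sq_sqrt (by positivity : (0:ℝ) ≤ lam * x)]

theorem stmt_10 (lam : ℝ) (hlam : 0 < lam) :
    Filter.Tendsto (fun x : ℝ => deriv (ncchi 2 lam) x) (nhdsWithin 0 (Set.Ioi 0))
      (nhds (1 / 4 * Real.exp (-lam / 2) * (lam / 2 - 1))) ∧
    (0 < 1 / 4 * Real.exp (-lam / 2) * (lam / 2 - 1) ↔ 2 < lam) := by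
  constructor
  · set φ : ℝ → ℝ := fun x => 1 / 2 * (Real.exp (-(x + lam) / 2) * (-1 / 2)) * gfun (lam * x / 4)
      + 1 / 2 * Real.exp (-(x + lam) / 2) * (deriv gfun (lam * x / 4) * (lam / 4)) with hφ
    have hF : ∀ x : ℝ, HasDerivAt (fun x => 1 / 2 * Real.exp (-(x + lam) / 2)
        * gfun (lam * x / 4)) (φ x) x := by
      intro x
      have hinner : HasDerivAt (fun x : ℝ => -(x + lam) / 2) (-1 / 2) x := by
        simpa using (((hasDerivAt_id x).add_const lam).neg.div_const 2)
      have h1 : HasDerivAt (fun x : ℝ => 1 / 2 * Real.exp (-(x + lam) / 2))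
          (1 / 2 * (Real.exp (-(x + lam) / 2) * (-1 / 2))) x := (hinner.exp).const_mul _
      have hin2 : HasDerivAt (fun x : ℝ => lam * x / 4) (lam / 4) x := by
        simpa using ((hasDerivAt_id x).const_mul lam).div_const 4
      have hg : HasDerivAt gfun (deriv gfun (lam * x / 4)) (lam * x / 4) :=
        ((gfun_analyticAt _).differentiableAt).hasDerivAt
      have h2 : HasDerivAt (fun x : ℝ => gfun (lam * x / 4))
          (deriv gfun (lam * x / 4) * (lam / 4)) x := hg.comp x hin2
      exact h1.mul h2
    have hmem : ∀ᶠ x in nhdsWithin 0 (Set.Ioi (0:ℝ)), φ x = deriv (ncchi 2 lam) x := by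
      filter_upwards [self_mem_nhdsWithin] with x hx
      have heq : ncchi 2 lam =ᶠ[nhds x]
          (fun x => 1 / 2 * Real.exp (-(x + lam) / 2) * gfun (lam * x / 4)) := by
        filter_upwards [isOpen_Ioi.mem_nhds hx] with y hy
        exact ncchi_two lam y hlam hy
      rw [heq.deriv_eq, (hF x).deriv]
    have hcont : ContinuousAt φ 0 := by
      have cg : ContinuousAt gfun 0 := (gfun_analyticAt 0).continuousAt
      have cdg : ContinuousAt (deriv gfun) 0 := (gfun_deriv_analyticAt 0).continuousAt
      have cin : ContinuousAt (fun x : ℝ => lam * x / 4) 0 := by fun_prop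
      have cin0 : (fun x : ℝ => lam * x / 4) 0 = 0 := by simp
      have c2 : ContinuousAt (fun x : ℝ => gfun (lam * x / 4)) 0 :=
        ContinuousAt.comp (g := gfun) (f := fun x : ℝ => lam * x / 4)
          (by simpa only [mul_zero, zero_div] using cg) cin
      have c3 : ContinuousAt (fun x : ℝ => deriv gfun (lam * x / 4)) 0 := by
        exact ContinuousAt.comp (g := deriv gfun) (f := fun x : ℝ => lam * x / 4)
          (by simpa using cdg) cin
      have c1 : ContinuousAt (fun x : ℝ => Real.exp (-(x + lam) / 2)) 0 := by fun_prop
      exact (((c1.mul continuousAt_const).const_mul _).mul c2).add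
        ((c1.const_mul _).mul (c3.mul continuousAt_const))
    have hval : φ 0 = 1 / 4 * Real.exp (-lam / 2) * (lam / 2 - 1) := by
      rw [hφ]
      simp only [zero_add, mul_zero, zero_div]
      rw [gfun_zero, gfun_deriv_zero]
      ring
    have : Filter.Tendsto φ (nhdsWithin 0 (Set.Ioi 0))
        (nhds (1 / 4 * Real.exp (-lam / 2) * (lam / 2 - 1))) :=
      hval ▸ (hcont.continuousWithinAt.tendsto)
    exact this.congr' hmem
  · have hE : (0:ℝ) < 1 / 4 * Real.exp (-lam / 2) := by positivity
    constructor
    · intro h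
      by_contra hle
      push_neg at hle
      nlinarith
    · intro h
      exact mul_pos hE (by linarith)
end

section
/- For k = 2 and λ > 2, the maximum of the density is not attained at the origin: there exists x > 0 such that f_{2,λ}(x) > (1/2)·exp(−λ/2), where (1/2)·exp(−λ/2) is the limiting value of f_{2,λ} at 0. -/
open Real

lemma besselI_zero_eq (y : ℝ) (hy : 0 ≤ y) :
    besselI 0 y = ∑' m : ℕ, (y ^ 2 / 4) ^ m / ((Nat.factorial m : ℝ)) ^ 2 := by
  unfold besselI
  congr 1
  ext m
  rw [show (2 * (m : ℝ) + 0) = ((2 * m : ℕ) : ℝ) by push_cast; ring,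
      Real.rpow_natCast,
      show ((m : ℝ) + 0 + 1) = ((m : ℕ) : ℝ) + 1 by ring,
      Real.Gamma_nat_eq_factorial, pow_mul, div_pow]
  norm_num
  ring

lemma besselI_zero_summable (y : ℝ) :
    Summable (fun m : ℕ => (y ^ 2 / 4) ^ m / ((Nat.factorial m : ℝ)) ^ 2) := by
  apply Summable.of_nonneg_of_le
    (fun m => by positivity)
    (fun m => ?_)
    (Real.summable_pow_div_factorial (y ^ 2 / 4))
  apply div_le_div_of_nonneg_left (by positivity)
  · positivity
  · have h1 : (1 : ℝ) ≤ (Nat.factorial m : ℝ) := by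
      exact_mod_cast Nat.one_le_iff_ne_zero.mpr (Nat.factorial_ne_zero m)
    nlinarith

lemma besselI_zero_ge (y : ℝ) (hy : 0 ≤ y) : 1 + y ^ 2 / 4 ≤ besselI 0 y := by
  rw [besselI_zero_eq y hy]
  have := Summable.sum_le_tsum (Finset.range 2)
    (fun m _ => by positivity : ∀ m ∉ Finset.range 2,
      (0:ℝ) ≤ (y ^ 2 / 4) ^ m / ((Nat.factorial m : ℝ)) ^ 2)
    (besselI_zero_summable y)
  calc 1 + y ^ 2 / 4 = ∑ m ∈ Finset.range 2, (y ^ 2 / 4) ^ m / ((Nat.factorial m : ℝ)) ^ 2 := by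
        simp [Finset.sum_range_succ, Nat.factorial]
    _ ≤ _ := this

theorem stmt_11 (lam : ℝ) (hlam : 2 < lam) :
    ∃ x : ℝ, 0 < x ∧ 1 / 2 * Real.exp (-lam / 2) < ncchi 2 lam x := by
  have hlam0 : (0:ℝ) < lam := by linarith
  set x : ℝ := 1 - 2 / lam with hxdef
  have hx : 0 < x := by
    have : 2 / lam < 1 := (div_lt_one hlam0).mpr hlam
    simp [hxdef]; linarith
  refine ⟨x, hx, ?_⟩
  have hlx : 0 < lam * x := by positivity
  have hsq : Real.sqrt (lam * x) ^ 2 = lam * x := Real.sq_sqrt hlx.le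
  have hB : 1 + lam * x / 4 ≤ besselI 0 (Real.sqrt (lam * x)) := by
    have := besselI_zero_ge (Real.sqrt (lam * x)) (Real.sqrt_nonneg _)
    rwa [hsq] at this
  have hnc : ncchi 2 lam x =
      1 / 2 * Real.exp (-(x + lam) / 2) * besselI 0 (Real.sqrt (lam * x)) := by
    unfold ncchi
    norm_num
  rw [hnc]
  have hexp : Real.exp (-(x + lam) / 2) = Real.exp (-x / 2) * Real.exp (-lam / 2) := by
    rw [← Real.exp_add]; ring_nf
  have hlin : 1 - x / 2 < Real.exp (-x / 2) := by
    have hxne : -x / 2 ≠ 0 := ne_of_lt (by simp only [hxdef] at hx ⊢; linarith)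
    have := Real.add_one_lt_exp hxne
    linarith
  -- key algebraic fact : (1 - x/2) * (1 + lam * x / 4) ≥ 1
  have hkey : 1 ≤ (1 - x / 2) * (1 + lam * x / 4) := by
    have hx' : lam * x = lam - 2 := by rw [hxdef]; field_simp
    have hx2 : x = (lam - 2) / lam := by field_simp [hxdef]; linarith [hx']
    rw [hx', hx2]
    have h2 : 1 - (lam - 2) / lam / 2 = (lam + 2) / (2 * lam) := by field_simp; ring
    rw [h2, div_mul_eq_mul_div, le_div_iff₀ (by positivity)]
    nlinarith [sq_nonneg (lam - 2)]
  have hpos : 0 < 1 + lam * x / 4 := by positivity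
  have h1 : 1 < Real.exp (-x / 2) * (1 + lam * x / 4) := by
    calc 1 ≤ (1 - x / 2) * (1 + lam * x / 4) := hkey
      _ < Real.exp (-x / 2) * (1 + lam * x / 4) := by
          exact mul_lt_mul_of_pos_right hlin hpos
  have hE : 0 < Real.exp (-lam / 2) := Real.exp_pos _
  have hEx : 0 < Real.exp (-x / 2) := Real.exp_pos _
  rw [hexp]
  nlinarith [mul_le_mul_of_nonneg_left hB (by positivity : (0:ℝ) ≤ 1 / 2 * (Real.exp (-x/2) * Real.exp (-lam/2)))]
end
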